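/- If α_z ≠ 0 and Var(ε_d) > 0, then Var(D) − (α_d/α_z)·Cov(D, Z) = Var(ε_d) > 0 and the causal coefficient satisfies β = (Cov(D, Y) − (α_d/α_z)·Cov(Y, Z)) / (Var(D) − (α_d/α_z)·Cov(D, Z)). -/

import Mathlib

open MeasureTheory ProbabilityTheory

/-- Covariance of two real random variables. -/
noncomputable def cov {Ω : Type*} [MeasurableSpace Ω] (μ : Measure Ω) (X Y : Ω → ℝ) : ℝ :=
  ∫ ω, (X ω - ∫ x, X x ∂μ) * (Y ω - ∫ x, Y x ∂μ) ∂μ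

lemma memLp_two_mul_integrable {Ω : Type*} [MeasurableSpace Ω] {μ : Measure Ω}
    {f g : Ω → ℝ} (hf : MeasureTheory.MemLp f 2 μ) (hg : MeasureTheory.MemLp g 2 μ) :
    MeasureTheory.Integrable (fun ω => f ω * g ω) μ := by
  rw [← MeasureTheory.memLp_one_iff_integrable]
  have := hg.smul hf (p := 2) (q := 2) (r := 1)
    (hpqr := ⟨by rw [inv_one]; exact ENNReal.inv_two_add_inv_two⟩)
  exact this

lemma integral_combo_mul {Ω : Type*} [MeasurableSpace Ω] (μ : Measure Ω)
    (g : Fin 4 → Ω → ℝ) (h2 : ∀ i, MeasureTheory.MemLp (g i) 2 μ)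
    (hz : ∀ i j, i ≠ j → ∫ ω, g i ω * g j ω ∂μ = 0) (a b : Fin 4 → ℝ) :
    ∫ ω, (∑ i, a i * g i ω) * (∑ j, b j * g j ω) ∂μ
      = ∑ i, a i * b i * ∫ ω, g i ω * g i ω ∂μ := by
  have hI : ∀ i j : Fin 4, MeasureTheory.Integrable (fun ω => g i ω * g j ω) μ :=
    fun i j => memLp_two_mul_integrable (h2 i) (h2 j)
  have step1 : (fun ω => (∑ i, a i * g i ω) * (∑ j, b j * g j ω))
      = fun ω => ∑ p : Fin 4 × Fin 4, (a p.1 * b p.2) * (g p.1 ω * g p.2 ω) := by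
    funext ω
    rw [Finset.sum_mul_sum, Fintype.sum_prod_type]
    exact Finset.sum_congr rfl fun i _ => Finset.sum_congr rfl fun j _ => by ring
  rw [step1, MeasureTheory.integral_finset_sum _ fun p _ => (hI p.1 p.2).const_mul _]
  simp only [MeasureTheory.integral_const_mul]
  rw [Fintype.sum_prod_type]
  refine Finset.sum_congr rfl fun i _ => ?_
  refine Finset.sum_eq_single i (fun j _ hji => ?_) (fun h => absurd (Finset.mem_univ i) h)
  rw [hz i j (Ne.symm hji), mul_zero]

/-- If α_z ≠ 0 and Var(ε_d) > 0 then
    Var(D) − (α_d/α_z)·Cov(D,Z) = Var(ε_d) > 0 and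
    β = (Cov(D,Y) − (α_d/α_z)·Cov(Y,Z)) / (Var(D) − (α_d/α_z)·Cov(D,Z)). -/
theorem beta_from_cross_moments
    {Ω : Type*} [MeasurableSpace Ω] {μ : MeasureTheory.Measure Ω}
    [MeasureTheory.IsProbabilityMeasure μ]
    (εu εz εd εy : Ω → ℝ)
    (hmu : Measurable εu) (hmz : Measurable εz) (hmd : Measurable εd) (hmy : Measurable εy)
    (hind : ProbabilityTheory.iIndepFun ![εu, εz, εd, εy] μ)
    (h0u : ∫ ω, εu ω ∂μ = 0) (h0z : ∫ ω, εz ω ∂μ = 0)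
    (h0d : ∫ ω, εd ω ∂μ = 0) (h0y : ∫ ω, εy ω ∂μ = 0)
    (hLu : ∀ n : ℕ, MeasureTheory.MemLp εu n μ) (hLz : ∀ n : ℕ, MeasureTheory.MemLp εz n μ)
    (hLd : ∀ n : ℕ, MeasureTheory.MemLp εd n μ) (hLy : ∀ n : ℕ, MeasureTheory.MemLp εy n μ)
    (αz αd β γ : ℝ) (Z D Y : Ω → ℝ)
    (hZ : ∀ ω, Z ω = αz * εu ω + εz ω)
    (hD : ∀ ω, D ω = αd * εu ω + εd ω)
    (hY : ∀ ω, Y ω = β * D ω + γ * εu ω + εy ω)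
    (hαz : αz ≠ 0) (hvard : 0 < variance εd μ) :
    variance D μ - (αd / αz) * cov μ D Z = variance εd μ ∧
    0 < variance D μ - (αd / αz) * cov μ D Z ∧
    β = (cov μ D Y - (αd / αz) * cov μ Y Z) /
        (variance D μ - (αd / αz) * cov μ D Z) := by
  set g : Fin 4 → Ω → ℝ := ![εu, εz, εd, εy] with hg
  have h2 : ∀ i, MeasureTheory.MemLp (g i) 2 μ := by
    intro i
    fin_cases i
    · simpa [hg] using hLu 2
    · simpa [hg] using hLz 2
    · simpa [hg] using hLd 2
    · simpa [hg] using hLy 2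
  have hmg : ∀ i, Measurable (g i) := by
    intro i; fin_cases i <;> assumption
  have h0g : ∀ i, ∫ ω, g i ω ∂μ = 0 := by
    intro i; fin_cases i <;> assumption
  have hz4 : ∀ i j, i ≠ j → ∫ ω, g i ω * g j ω ∂μ = 0 := by
    intro i j hij
    have h := (hind.indepFun hij).integral_mul_eq_mul_integral (hmg i).aestronglyMeasurable
      (hmg j).aestronglyMeasurable
    have h' : ∫ ω, g i ω * g j ω ∂μ = (∫ ω, g i ω ∂μ) * ∫ ω, g j ω ∂μ := h
    rw [h', h0g i, h0g j, mul_zero]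
  -- integrability
  have hu1 : MeasureTheory.Integrable εu μ :=
    MeasureTheory.memLp_one_iff_integrable.mp (by simpa using hLu 1)
  have hz1 : MeasureTheory.Integrable εz μ :=
    MeasureTheory.memLp_one_iff_integrable.mp (by simpa using hLz 1)
  have hd1 : MeasureTheory.Integrable εd μ :=
    MeasureTheory.memLp_one_iff_integrable.mp (by simpa using hLd 1)
  have hy1 : MeasureTheory.Integrable εy μ :=
    MeasureTheory.memLp_one_iff_integrable.mp (by simpa using hLy 1)
  -- coefficient vectors
  set aD : Fin 4 → ℝ := ![αd, 0, 1, 0] with haD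
  set aZ : Fin 4 → ℝ := ![αz, 1, 0, 0] with haZ
  set aY : Fin 4 → ℝ := ![β * αd + γ, 0, β, 1] with haY
  have hDsum : ∀ ω, D ω = ∑ i, aD i * g i ω := by
    intro ω; rw [hD]; simp [haD, hg, Fin.sum_univ_four]
  have hZsum : ∀ ω, Z ω = ∑ i, aZ i * g i ω := by
    intro ω; rw [hZ]; simp [haZ, hg, Fin.sum_univ_four]
  have hYsum : ∀ ω, Y ω = ∑ i, aY i * g i ω := by
    intro ω; rw [hY, hD]; simp [haY, hg, Fin.sum_univ_four]; ring
  -- means are zero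
  have hED : ∫ ω, D ω ∂μ = 0 := by
    have h1 : ∫ ω, D ω ∂μ = ∫ ω, αd * εu ω + εd ω ∂μ := by simp only [hD]
    rw [h1, MeasureTheory.integral_add (hu1.const_mul _) hd1,
      MeasureTheory.integral_const_mul, h0u, h0d]; ring
  have hEZ : ∫ ω, Z ω ∂μ = 0 := by
    have h1 : ∫ ω, Z ω ∂μ = ∫ ω, αz * εu ω + εz ω ∂μ := by simp only [hZ]
    rw [h1, MeasureTheory.integral_add (hu1.const_mul _) hz1,
      MeasureTheory.integral_const_mul, h0u, h0z]; ring
  have hDi : MeasureTheory.Integrable D μ := by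
    have : D = fun ω => αd * εu ω + εd ω := funext hD
    rw [this]; exact (hu1.const_mul _).add hd1
  have hEY : ∫ ω, Y ω ∂μ = 0 := by
    have h1 : ∫ ω, Y ω ∂μ = ∫ ω, β * D ω + γ * εu ω + εy ω ∂μ := by simp only [hY]
    have hbd : MeasureTheory.Integrable (fun ω => β * D ω + γ * εu ω) μ :=
      (hDi.const_mul β).add (hu1.const_mul γ)
    rw [h1, MeasureTheory.integral_add hbd hy1,
      MeasureTheory.integral_add (hDi.const_mul _) (hu1.const_mul _),
      MeasureTheory.integral_const_mul, MeasureTheory.integral_const_mul, hED, h0u, h0y]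
    ring
  -- second moments
  set mu : ℝ := ∫ ω, εu ω * εu ω ∂μ with hmu2
  set md : ℝ := ∫ ω, εd ω * εd ω ∂μ with hmd2
  have key : ∀ a b : Fin 4 → ℝ,
      ∫ ω, (∑ i, a i * g i ω) * (∑ j, b j * g j ω) ∂μ
        = ∑ i, a i * b i * ∫ ω, g i ω * g i ω ∂μ :=
    fun a b => integral_combo_mul μ g h2 hz4 a b
  have hcovDZ : cov μ D Z = αd * αz * mu := by
    unfold cov
    rw [hED, hEZ]
    simp only [sub_zero]
    have h1 : ∫ ω, D ω * Z ω ∂μ = ∫ ω, (∑ i, aD i * g i ω) * (∑ j, aZ j * g j ω) ∂μ := by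
      simp only [hDsum, hZsum]
    rw [h1, key aD aZ]
    simp [haD, haZ, hg, Fin.sum_univ_four, hmu2]
  have hcovDY : cov μ D Y = αd * (β * αd + γ) * mu + β * md := by
    unfold cov
    rw [hED, hEY]
    simp only [sub_zero]
    have h1 : ∫ ω, D ω * Y ω ∂μ = ∫ ω, (∑ i, aD i * g i ω) * (∑ j, aY j * g j ω) ∂μ := by
      simp only [hDsum, hYsum]
    rw [h1, key aD aY]
    simp [haD, haY, hg, Fin.sum_univ_four, hmu2, hmd2]
  have hcovYZ : cov μ Y Z = (β * αd + γ) * αz * mu := by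
    unfold cov
    rw [hEY, hEZ]
    simp only [sub_zero]
    have h1 : ∫ ω, Y ω * Z ω ∂μ = ∫ ω, (∑ i, aY i * g i ω) * (∑ j, aZ j * g j ω) ∂μ := by
      simp only [hYsum, hZsum]
    rw [h1, key aY aZ]
    simp [haY, haZ, hg, Fin.sum_univ_four, hmu2]
  have hD2 : MeasureTheory.MemLp D 2 μ := by
    have : D = fun ω => αd * εu ω + εd ω := funext hD
    rw [this]
    exact ((h2 0).const_mul αd).add (h2 2)
  have hvarD : variance D μ = αd * αd * mu + md := by
    rw [ProbabilityTheory.variance_eq_sub hD2, hED]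
    have h1 : ∫ ω, (D ^ 2) ω ∂μ = ∫ ω, (∑ i, aD i * g i ω) * (∑ j, aD j * g j ω) ∂μ := by
      simp only [Pi.pow_apply, pow_two, hDsum]
    rw [h1, key aD aD]
    simp [haD, hg, Fin.sum_univ_four, hmu2, hmd2]
  have hd2 : MeasureTheory.MemLp εd 2 μ := by simpa using hLd 2
  have hvarEd : variance εd μ = md := by
    rw [ProbabilityTheory.variance_eq_sub hd2, h0d]
    have h1 : ∫ ω, (εd ^ 2) ω ∂μ = ∫ ω, εd ω * εd ω ∂μ := by
      simp only [Pi.pow_apply, pow_two]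
    rw [h1, ← hmd2]
    ring
  have hmdpos : 0 < md := by rw [hvarEd] at hvard; exact hvard
  have hmain : variance D μ - αd / αz * cov μ D Z = variance εd μ := by
    rw [hvarD, hcovDZ, hvarEd]
    field_simp
    ring
  refine ⟨hmain, ?_, ?_⟩
  · rw [hmain, hvarEd]; exact hmdpos
  · rw [hmain, hvarEd, hcovDY, hcovYZ]
    have hnum : αd * (β * αd + γ) * mu + β * md - αd / αz * ((β * αd + γ) * αz * mu)
        = β * md := by field_simp; ring
    rw [hnum, mul_div_assoc, div_self (ne_of_gt hmdpos), mul_one]
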